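/- Let X be a real random variable and ε ~ Uniform[−1/2, 1/2] independent of X, and let Q round to the nearest integer. Then (X, Q(X + ε) − ε) has the same joint distribution as (X, X + ε'), where ε' ~ Uniform[−1/2,1/2] is independent of X. -/

import Mathlib

open MeasureTheory ProbabilityTheory Set

/-- Pushforward of a restricted volume under the reflection `y ↦ k - y`. -/
lemma map_const_sub_restrict (k : ℝ) (s : Set ℝ) :
    Measure.map (fun y => k - y) (volume.restrict s) =
      volume.restrict ((fun y => k - y) '' s) :=
  ((Measure.measurePreserving_sub_left volume k).restrict_image_emb
    (MeasurableEquiv.subLeft k).measurableEmbedding s).map_eq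

/-- Pushforward of a restricted volume under translation `y ↦ k + y`. -/
lemma map_const_add_restrict (k : ℝ) (s : Set ℝ) :
    Measure.map (fun y => k + y) (volume.restrict s) =
      volume.restrict ((fun y => k + y) '' s) :=
  ((measurePreserving_add_left volume k).restrict_image_emb
    (MeasurableEquiv.addLeft k).measurableEmbedding s).map_eq

lemma meas_f (x : ℝ) : Measurable (fun e : ℝ => (⌊x + e + 1 / 2⌋ : ℝ) - e) :=
  (measurable_from_top.comp ((measurable_const.add measurable_id).add
    measurable_const).floor).sub measurable_id

/-- The one-dimensional key fact: for fixed `x`, `⌊x + ε + 1/2⌋ - ε` has the same law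
as `x + ε` when `ε` is uniform on `[-1/2, 1/2]`. -/
lemma oneD (x : ℝ) :
    Measure.map (fun e => (⌊x + e + 1 / 2⌋ : ℝ) - e)
        (volume.restrict (Icc (-(1 / 2) : ℝ) (1 / 2))) =
      Measure.map (fun e => x + e) (volume.restrict (Icc (-(1 / 2) : ℝ) (1 / 2))) := by
  set e₀ : ℝ := (⌈x⌉ : ℝ) - x - 1 / 2 with he₀
  have h1 : (x : ℝ) ≤ (⌈x⌉ : ℝ) := Int.le_ceil x
  have h2 : ((⌈x⌉ : ℝ)) < x + 1 := Int.ceil_lt_add_one x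
  have he₀l : (-(1 / 2) : ℝ) ≤ e₀ := by rw [he₀]; linarith
  have he₀r : e₀ ≤ (1 / 2 : ℝ) := by rw [he₀]; linarith
  -- RHS
  have hRHS : Measure.map (fun e => x + e) (volume.restrict (Icc (-(1 / 2) : ℝ) (1 / 2)))
      = volume.restrict (Icc (x - 1 / 2) (x + 1 / 2)) := by
    rw [map_const_add_restrict, image_const_add_Icc]
    norm_num [sub_eq_add_neg]
  -- LHS: split the interval
  have hsplit : volume.restrict (Icc (-(1 / 2) : ℝ) (1 / 2))
      = volume.restrict (Ico (-(1 / 2) : ℝ) e₀) + volume.restrict (Ico e₀ (1 / 2 : ℝ)) := by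
    rw [← Measure.restrict_union (Ico_disjoint_Ico_same) measurableSet_Ico,
      Ico_union_Ico_eq_Ico he₀l he₀r, restrict_Ico_eq_restrict_Icc]
  have hcongr1 : Measure.map (fun e => (⌊x + e + 1 / 2⌋ : ℝ) - e)
      (volume.restrict (Ico (-(1 / 2) : ℝ) e₀))
      = Measure.map (fun e => ((⌈x⌉ : ℝ) - 1) - e) (volume.restrict (Ico (-(1 / 2) : ℝ) e₀)) := by
    refine Measure.map_congr ?_
    filter_upwards [ae_restrict_mem measurableSet_Ico] with e he
    obtain ⟨ha, hb⟩ := he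
    have hb' : e < (⌈x⌉ : ℝ) - x - 1 / 2 := he₀ ▸ hb
    have h3 : ⌊x + e + 1 / 2⌋ = ⌈x⌉ - 1 := by
      rw [Int.floor_eq_iff]
      constructor
      · push_cast; linarith
      · push_cast; linarith
    rw [h3]; push_cast; ring
  have hcongr2 : Measure.map (fun e => (⌊x + e + 1 / 2⌋ : ℝ) - e)
      (volume.restrict (Ico e₀ (1 / 2 : ℝ)))
      = Measure.map (fun e => ((⌈x⌉ : ℝ)) - e) (volume.restrict (Ico e₀ (1 / 2 : ℝ))) := by
    refine Measure.map_congr ?_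
    filter_upwards [ae_restrict_mem measurableSet_Ico] with e he
    obtain ⟨ha, hb⟩ := he
    have ha' : (⌈x⌉ : ℝ) - x - 1 / 2 ≤ e := he₀ ▸ ha
    have h3 : ⌊x + e + 1 / 2⌋ = ⌈x⌉ := by
      rw [Int.floor_eq_iff]
      constructor
      · linarith
      · linarith
    rw [h3]
  rw [hRHS, hsplit, Measure.map_add _ _ (meas_f x), hcongr1, hcongr2,
    map_const_sub_restrict, map_const_sub_restrict, image_const_sub_Ico, image_const_sub_Ico]
  have hA : (⌈x⌉ : ℝ) - 1 - e₀ = x - 1 / 2 := by rw [he₀]; ring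
  have hB : (⌈x⌉ : ℝ) - 1 - -(1 / 2) = (⌈x⌉ : ℝ) - 1 / 2 := by ring
  have hC : (⌈x⌉ : ℝ) - e₀ = x + 1 / 2 := by rw [he₀]; ring
  rw [hA, hB, hC]
  rw [← Measure.restrict_union (Ioc_disjoint_Ioc_of_le le_rfl) measurableSet_Ioc,
    Ioc_union_Ioc_eq_Ioc (by linarith) (by linarith),
    restrict_Ioc_eq_restrict_Icc]

/-- Zamir–Feder dithered quantization: if `ε ~ Uniform[−1/2, 1/2]` is
independent of `X` and `Q` rounds to the nearest integer (`Q x = ⌊x + 1/2⌋`), then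
`(X, Q(X + ε) − ε)` has the same joint distribution as `(X, X + ε)`. -/
theorem stmt_14 (Ω : Type*) [MeasurableSpace Ω] (μ : Measure Ω) [IsProbabilityMeasure μ]
    (X ε : Ω → ℝ) (hX : Measurable X) (hε : Measurable ε)
    (hindep : IndepFun X ε μ)
    (hunif : Measure.map ε μ = volume.restrict (Set.Icc (-(1 / 2) : ℝ) (1 / 2))) :
    Measure.map (fun ω => (X ω, (⌊X ω + ε ω + 1 / 2⌋ : ℝ) - ε ω)) μ =
      Measure.map (fun ω => (X ω, X ω + ε ω)) μ := by
  have hpair : Measurable (fun ω => (X ω, ε ω)) := hX.prodMk hε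
  set F : ℝ × ℝ → ℝ × ℝ := fun p => (p.1, (⌊p.1 + p.2 + 1 / 2⌋ : ℝ) - p.2) with hF
  set G : ℝ × ℝ → ℝ × ℝ := fun p => (p.1, p.1 + p.2) with hG
  have hFm : Measurable F :=
    measurable_fst.prodMk ((measurable_from_top.comp
      ((measurable_fst.add measurable_snd).add measurable_const).floor).sub measurable_snd)
  have hGm : Measurable G := measurable_fst.prodMk (measurable_fst.add measurable_snd)
  have hjoint : Measure.map (fun ω => (X ω, ε ω)) μ
      = (Measure.map X μ).prod (Measure.map ε μ) :=
    (indepFun_iff_map_prod_eq_prod_map_map hX.aemeasurable hε.aemeasurable).mp hindep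
  have h1 : Measure.map (fun ω => (X ω, (⌊X ω + ε ω + 1 / 2⌋ : ℝ) - ε ω)) μ
      = Measure.map F ((Measure.map X μ).prod (Measure.map ε μ)) := by
    rw [← hjoint, Measure.map_map hFm hpair]; rfl
  have h2 : Measure.map (fun ω => (X ω, X ω + ε ω)) μ
      = Measure.map G ((Measure.map X μ).prod (Measure.map ε μ)) := by
    rw [← hjoint, Measure.map_map hGm hpair]; rfl
  rw [h1, h2, hunif]
  set ρ : Measure ℝ := volume.restrict (Set.Icc (-(1 / 2) : ℝ) (1 / 2)) with hρ
  have : IsFiniteMeasure ρ := by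
    constructor
    rw [hρ, Measure.restrict_apply_univ]
    simp [Real.volume_Icc]
  ext s hs
  rw [Measure.map_apply hFm hs, Measure.map_apply hGm hs,
    Measure.prod_apply (hFm hs), Measure.prod_apply (hGm hs)]
  refine lintegral_congr fun x => ?_
  have hslice : MeasurableSet (Prod.mk x ⁻¹' s) := measurable_prodMk_left hs
  have hl : Prod.mk x ⁻¹' (F ⁻¹' s) = (fun e => (⌊x + e + 1 / 2⌋ : ℝ) - e) ⁻¹' (Prod.mk x ⁻¹' s) := rfl
  have hr : Prod.mk x ⁻¹' (G ⁻¹' s) = (fun e => x + e) ⁻¹' (Prod.mk x ⁻¹' s) := rfl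
  rw [hl, hr, ← Measure.map_apply (meas_f x) hslice,
    ← Measure.map_apply (by fun_prop : Measurable fun e : ℝ => x + e) hslice, hρ, oneD]
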